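/- Let μ : ℝ → ℝ be a continuous nonnegative function, let s : ℝ → ℝ be a nonnegative integrable function (the time significance), let k ≥ 1 be an integer, and fix T > 0. Define the average visibility V(k)[λ] = ∫_0^T f_k(t; λ, μ) · s(t) dt. Then V(k) is concave on the set of continuous nonnegative functions: for all continuous nonnegative λ_1, λ_2 : ℝ → ℝ and all α ∈ (0,1), V(k)[α·λ_1 + (1-α)·λ_2] ≥ α · V(k)[λ_1] + (1-α) · V(k)[λ_2]. -/

import Mathlib

open MeasureTheory Real Set Filter Topology intervalIntegral

/-- The upper incomplete Gamma function `Γ(k, x) = ∫_x^∞ s^{k-1} e^{-s} ds`. -/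
noncomputable def uGamma (k : ℕ) (x : ℝ) : ℝ :=
  ∫ s in Set.Ioi x, s ^ (k - 1) * Real.exp (-s)

/-- `f_k(t; λ, μ) = (1/(k-1)!) ∫_0^t λ(τ) exp(-∫_τ^t λ) Γ(k, ∫_τ^t μ) dτ`. -/
noncomputable def fk (k : ℕ) (lam mu : ℝ → ℝ) (t : ℝ) : ℝ :=
  (1 / (Nat.factorial (k - 1) : ℝ)) *
    ∫ τ in (0:ℝ)..t,
      lam τ * Real.exp (-∫ x in τ..t, lam x) * uGamma k (∫ x in τ..t, mu x)

lemma gk_cont (k : ℕ) : Continuous (fun s : ℝ => s ^ (k - 1) * Real.exp (-s)) := by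
  continuity

lemma gk_integrableOn (k : ℕ) (hk : 1 ≤ k) (a : ℝ) :
    IntegrableOn (fun s : ℝ => s ^ (k - 1) * Real.exp (-s)) (Set.Ioi a) := by
  have h0 : IntegrableOn (fun s : ℝ => s ^ (k - 1) * Real.exp (-s)) (Set.Ioi 0) := by
    have := Real.GammaIntegral_convergent (s := (k : ℝ))
      (by exact_mod_cast Nat.pos_of_ne_zero (by omega))
    refine this.congr_fun (fun x hx => ?_) measurableSet_Ioi
    have hx0 : (0:ℝ) < x := hx
    rw [mul_comm]
    congr 1
    rw [show (k:ℝ) - 1 = ((k - 1 : ℕ) : ℝ) by push_cast [Nat.cast_sub hk]; ring]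
    exact congrArg _ (Real.rpow_natCast x (k-1))
  rcases le_or_gt 0 a with ha | ha
  · exact h0.mono_set (Set.Ioi_subset_Ioi ha)
  · have : Set.Ioi a = Set.Ioc a 0 ∪ Set.Ioi 0 := (Set.Ioc_union_Ioi_eq_Ioi ha.le).symm
    rw [this, integrableOn_union]
    exact ⟨((gk_cont k).continuousOn).integrableOn_compact isCompact_Icc |>.mono_set
      Set.Ioc_subset_Icc_self, h0⟩

lemma uGamma_sub (k : ℕ) (hk : 1 ≤ k) (a b : ℝ) (hab : a ≤ b) :
    uGamma k a = (∫ s in a..b, s ^ (k - 1) * Real.exp (-s)) + uGamma k b := by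
  rw [intervalIntegral.integral_of_le hab, uGamma, uGamma,
    ← Set.Ioc_union_Ioi_eq_Ioi hab,
    setIntegral_union (Set.Ioc_disjoint_Ioi le_rfl) measurableSet_Ioi
      ((gk_integrableOn k hk a).mono_set Set.Ioc_subset_Ioi_self) (gk_integrableOn k hk b)]

lemma uGamma_eq (k : ℕ) (hk : 1 ≤ k) (a y : ℝ) :
    uGamma k y = uGamma k a - ∫ s in a..y, s ^ (k - 1) * Real.exp (-s) := by
  rcases le_total a y with h | h
  · rw [uGamma_sub k hk a y h]; ring
  · rw [uGamma_sub k hk y a h, intervalIntegral.integral_symm]; ring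

lemma uGamma_hasDerivAt (k : ℕ) (hk : 1 ≤ k) (x : ℝ) :
    HasDerivAt (uGamma k) (-(x ^ (k - 1) * Real.exp (-x))) x := by
  have : ∀ y, uGamma k y = uGamma k (x - 1) - ∫ s in (x-1)..y, s ^ (k - 1) * Real.exp (-s) :=
    fun y => uGamma_eq k hk (x - 1) y
  have hD : HasDerivAt (fun y => ∫ s in (x-1)..y, s ^ (k - 1) * Real.exp (-s))
      (x ^ (k - 1) * Real.exp (-x)) x := by
    refine intervalIntegral.integral_hasDerivAt_right
      ((gk_cont k).intervalIntegrable _ _)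
      ((gk_cont k).stronglyMeasurableAtFilter _ _) (gk_cont k).continuousAt
  have h2 : HasDerivAt (fun y => uGamma k (x-1) - ∫ s in (x-1)..y, s ^ (k - 1) * Real.exp (-s))
      (-(x ^ (k - 1) * Real.exp (-x))) x := by
    simpa using (hasDerivAt_const x (uGamma k (x-1))).fun_sub hD
  exact h2.congr_of_eventuallyEq (Filter.Eventually.of_forall this)

lemma uGamma_zero (k : ℕ) (hk : 1 ≤ k) : uGamma k 0 = (Nat.factorial (k - 1) : ℝ) := by
  have h1 : Real.Gamma ((k - 1 : ℕ) + 1) = ((k-1).factorial : ℝ) := Real.Gamma_nat_eq_factorial (k-1)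
  have h2 : Real.Gamma ((k:ℝ)) = ∫ x in Set.Ioi (0:ℝ), Real.exp (-x) * x ^ ((k:ℝ) - 1) :=
    Real.Gamma_eq_integral (by exact_mod_cast Nat.pos_of_ne_zero (by omega))
  have h3 : ((k - 1 : ℕ) : ℝ) + 1 = (k : ℝ) := by push_cast [Nat.cast_sub hk]; ring
  rw [uGamma, ← h1, h3, h2]
  refine setIntegral_congr_fun measurableSet_Ioi fun x hx => ?_
  have hx0 : (0:ℝ) < x := hx
  rw [mul_comm]
  congr 1
  rw [show (k:ℝ) - 1 = ((k - 1 : ℕ) : ℝ) by push_cast [Nat.cast_sub hk]; ring,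
    Real.rpow_natCast]

lemma uGamma_nonneg (k : ℕ) (x : ℝ) (hx : 0 ≤ x) : 0 ≤ uGamma k x := by
  refine setIntegral_nonneg measurableSet_Ioi fun s hs => ?_
  have : (0:ℝ) < s := lt_of_le_of_lt hx hs
  positivity

lemma uGamma_cont (k : ℕ) (hk : 1 ≤ k) : Continuous (uGamma k) :=
  continuous_iff_continuousAt.2 fun x => (uGamma_hasDerivAt k hk x).continuousAt

lemma fk_inner_eq (k : ℕ) (hk : 1 ≤ k) (lam mu : ℝ → ℝ)
    (hlc : Continuous lam) (hmc : Continuous mu) (t : ℝ) :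
    (∫ τ in (0:ℝ)..t, lam τ * Real.exp (-∫ x in τ..t, lam x) * uGamma k (∫ x in τ..t, mu x))
    = (Nat.factorial (k-1) : ℝ)
      - Real.exp (-∫ x in (0:ℝ)..t, lam x) * uGamma k (∫ x in (0:ℝ)..t, mu x)
      - ∫ τ in (0:ℝ)..t, Real.exp (-∫ x in τ..t, lam x) *
          (mu τ * ((∫ x in τ..t, mu x) ^ (k-1) * Real.exp (-(∫ x in τ..t, mu x)))) := by
  set u : ℝ → ℝ := fun τ => Real.exp (-∫ x in τ..t, lam x) with hu_def
  set v : ℝ → ℝ := fun τ => uGamma k (∫ x in τ..t, mu x) with hv_def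
  have hL : ∀ τ, (∫ x in τ..t, lam x)
      = (∫ x in (0:ℝ)..t, lam x) - ∫ x in (0:ℝ)..τ, lam x := fun τ =>
    (intervalIntegral.integral_interval_sub_left (hlc.intervalIntegrable _ _)
      (hlc.intervalIntegrable _ _)).symm
  have hM : ∀ τ, (∫ x in τ..t, mu x)
      = (∫ x in (0:ℝ)..t, mu x) - ∫ x in (0:ℝ)..τ, mu x := fun τ =>
    (intervalIntegral.integral_interval_sub_left (hmc.intervalIntegrable _ _)
      (hmc.intervalIntegrable _ _)).symm
  have hP : ∀ τ : ℝ, HasDerivAt (fun y => ∫ x in (0:ℝ)..y, lam x) (lam τ) τ := fun τ =>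
    intervalIntegral.integral_hasDerivAt_right (hlc.intervalIntegrable _ _)
      (hlc.stronglyMeasurableAtFilter _ _) hlc.continuousAt
  have hQ : ∀ τ : ℝ, HasDerivAt (fun y => ∫ x in (0:ℝ)..y, mu x) (mu τ) τ := fun τ =>
    intervalIntegral.integral_hasDerivAt_right (hmc.intervalIntegrable _ _)
      (hmc.stronglyMeasurableAtFilter _ _) hmc.continuousAt
  have hu : ∀ τ : ℝ, HasDerivAt u (lam τ * u τ) τ := by
    intro τ
    have h1 : HasDerivAt (fun y => -∫ x in y..t, lam x) (lam τ) τ := by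
      have h2 : HasDerivAt (fun y => (∫ x in (0:ℝ)..y, lam x) - ∫ x in (0:ℝ)..t, lam x)
          (lam τ) τ := ((hP τ).sub_const (∫ x in (0:ℝ)..t, lam x))
      refine h2.congr_of_eventuallyEq (Filter.Eventually.of_forall fun y => ?_)
      show -(∫ x in y..t, lam x) = (∫ x in (0:ℝ)..y, lam x) - ∫ x in (0:ℝ)..t, lam x
      rw [hL y]; ring
    simpa [mul_comm] using h1.exp
  have hv : ∀ τ : ℝ, HasDerivAt v
      (mu τ * ((∫ x in τ..t, mu x) ^ (k-1) * Real.exp (-(∫ x in τ..t, mu x)))) τ := by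
    intro τ
    have h1 : HasDerivAt (fun y => ∫ x in y..t, mu x) (-(mu τ)) τ := by
      have h2 : HasDerivAt (fun y => (∫ x in (0:ℝ)..t, mu x) - ∫ x in (0:ℝ)..y, mu x)
          (-(mu τ)) τ := (hQ τ).const_sub _
      refine h2.congr_of_eventuallyEq (Filter.Eventually.of_forall fun y => ?_)
      show (∫ x in y..t, mu x) = (∫ x in (0:ℝ)..t, mu x) - ∫ x in (0:ℝ)..y, mu x
      rw [hM y]
    have h3 := (uGamma_hasDerivAt k hk (∫ x in τ..t, mu x)).comp τ h1
    exact h3.congr_deriv (by ring)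
  have hucont : Continuous u := continuous_iff_continuousAt.2 fun τ => (hu τ).continuousAt
  have hvcont : Continuous v := continuous_iff_continuousAt.2 fun τ => (hv τ).continuousAt
  have hMcont : Continuous (fun τ => ∫ x in τ..t, mu x) := by
    refine Continuous.congr (f := fun τ => (∫ x in (0:ℝ)..t, mu x) - ∫ x in (0:ℝ)..τ, mu x)
      (continuous_const.sub (intervalIntegral.continuous_primitive
        (fun a b => hmc.intervalIntegrable a b) 0)) fun τ => (hM τ).symm
  have hv'cont : Continuous (fun τ =>
      mu τ * ((∫ x in τ..t, mu x) ^ (k-1) * Real.exp (-(∫ x in τ..t, mu x)))) :=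
    hmc.mul ((hMcont.pow _).mul hMcont.neg.rexp)
  have hIBP := intervalIntegral.integral_deriv_mul_eq_sub_of_hasDerivAt
    (a := (0:ℝ)) (b := t) (u := u) (v := v)
    (u' := fun τ => lam τ * u τ)
    (v' := fun τ => mu τ * ((∫ x in τ..t, mu x) ^ (k-1) * Real.exp (-(∫ x in τ..t, mu x))))
    (hucont.continuousOn) (hvcont.continuousOn)
    (fun x _ => hu x) (fun x _ => hv x)
    ((hlc.mul hucont).intervalIntegrable _ _)
    (hv'cont.intervalIntegrable _ _)
  have hsplit : (∫ τ in (0:ℝ)..t, (lam τ * u τ * v τ + u τ *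
        (mu τ * ((∫ x in τ..t, mu x) ^ (k-1) * Real.exp (-(∫ x in τ..t, mu x))))))
      = (∫ τ in (0:ℝ)..t, lam τ * u τ * v τ)
        + ∫ τ in (0:ℝ)..t, u τ *
          (mu τ * ((∫ x in τ..t, mu x) ^ (k-1) * Real.exp (-(∫ x in τ..t, mu x)))) := by
    exact intervalIntegral.integral_add (((hlc.mul hucont).mul hvcont).intervalIntegrable _ _)
      ((hucont.mul hv'cont).intervalIntegrable _ _)
  have hut : u t = 1 := by simp [hu_def]
  have hvt : v t = (Nat.factorial (k-1) : ℝ) := by simp [hv_def, uGamma_zero k hk]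
  rw [hsplit, hut, hvt] at hIBP
  linarith [hIBP]

/-- Convexity of `exp` in the form we need. -/
lemma exp_combo (α a b : ℝ) (h0 : 0 ≤ α) (h1 : α ≤ 1) :
    Real.exp (-(α * a + (1 - α) * b)) ≤ α * Real.exp (-a) + (1 - α) * Real.exp (-b) := by
  have := convexOn_exp.2 (Set.mem_univ (-a)) (Set.mem_univ (-b)) h0 (by linarith)
    (by ring : α + (1 - α) = 1)
  rw [show -(α * a + (1 - α) * b) = α * -a + (1 - α) * -b by ring]
  simpa [smul_eq_mul] using this

/-- Pointwise concavity of `fk` in `lam`. -/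
lemma fk_concave_pt (mu : ℝ → ℝ) (hmuc : Continuous mu) (hmu : ∀ x, 0 ≤ mu x)
    (k : ℕ) (hk : 1 ≤ k)
    (lam1 lam2 : ℝ → ℝ) (hc1 : Continuous lam1) (hc2 : Continuous lam2)
    (α : ℝ) (hα0 : 0 ≤ α) (hα1 : α ≤ 1) (t : ℝ) (ht : 0 ≤ t) :
    α * fk k lam1 mu t + (1 - α) * fk k lam2 mu t
      ≤ fk k (fun x => α * lam1 x + (1 - α) * lam2 x) mu t := by
  set lam3 : ℝ → ℝ := fun x => α * lam1 x + (1 - α) * lam2 x with hlam3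
  have hc3 : Continuous lam3 := (continuous_const.mul hc1).add (continuous_const.mul hc2)
  have hlin : ∀ a b : ℝ, (∫ x in a..b, lam3 x)
      = α * (∫ x in a..b, lam1 x) + (1 - α) * (∫ x in a..b, lam2 x) := by
    intro a b
    rw [show (∫ x in a..b, lam3 x) = ∫ x in a..b, (α * lam1 x + (1 - α) * lam2 x) from rfl,
      intervalIntegral.integral_add ((continuous_const.fun_mul hc1).intervalIntegrable _ _)
        ((continuous_const.fun_mul hc2).intervalIntegrable _ _),
      intervalIntegral.integral_const_mul, intervalIntegral.integral_const_mul]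
  have hMcont : Continuous (fun τ => ∫ x in τ..t, mu x) := by
    refine Continuous.congr (f := fun τ => (∫ x in (0:ℝ)..t, mu x) - ∫ x in (0:ℝ)..τ, mu x)
      (continuous_const.sub (intervalIntegral.continuous_primitive
        (fun a b => hmuc.intervalIntegrable a b) 0))
      fun τ => (intervalIntegral.integral_interval_sub_left (hmuc.intervalIntegrable _ _)
        (hmuc.intervalIntegrable _ _))
  have hcc : ∀ lam : ℝ → ℝ, Continuous lam →
      Continuous (fun τ => Real.exp (-∫ x in τ..t, lam x) *
        (mu τ * ((∫ x in τ..t, mu x) ^ (k-1) * Real.exp (-(∫ x in τ..t, mu x))))) := by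
    intro lam hlc
    have : Continuous (fun τ => ∫ x in τ..t, lam x) := by
      refine Continuous.congr (f := fun τ => (∫ x in (0:ℝ)..t, lam x) - ∫ x in (0:ℝ)..τ, lam x)
        (continuous_const.sub (intervalIntegral.continuous_primitive
          (fun a b => hlc.intervalIntegrable a b) 0))
        fun τ => (intervalIntegral.integral_interval_sub_left (hlc.intervalIntegrable _ _)
          (hlc.intervalIntegrable _ _))
    exact this.neg.rexp.mul (hmuc.mul ((hMcont.pow _).mul hMcont.neg.rexp))
  -- abbreviations
  set e1 : ℝ := Real.exp (-∫ x in (0:ℝ)..t, lam1 x) with he1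
  set e2 : ℝ := Real.exp (-∫ x in (0:ℝ)..t, lam2 x) with he2
  set G0 : ℝ := uGamma k (∫ x in (0:ℝ)..t, mu x) with hG0
  set I1 : ℝ := ∫ τ in (0:ℝ)..t, Real.exp (-∫ x in τ..t, lam1 x) *
      (mu τ * ((∫ x in τ..t, mu x) ^ (k-1) * Real.exp (-(∫ x in τ..t, mu x)))) with hI1
  set I2 : ℝ := ∫ τ in (0:ℝ)..t, Real.exp (-∫ x in τ..t, lam2 x) *
      (mu τ * ((∫ x in τ..t, mu x) ^ (k-1) * Real.exp (-(∫ x in τ..t, mu x)))) with hI2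
  have hG0n : 0 ≤ G0 := uGamma_nonneg k _
    (intervalIntegral.integral_nonneg ht fun x _ => hmu x)
  -- exponential comparison at 0
  have hexp0 : Real.exp (-∫ x in (0:ℝ)..t, lam3 x) ≤ α * e1 + (1 - α) * e2 := by
    rw [hlin 0 t]; exact exp_combo α _ _ hα0 hα1
  -- integral comparison
  have hIcomp : (∫ τ in (0:ℝ)..t, Real.exp (-∫ x in τ..t, lam3 x) *
      (mu τ * ((∫ x in τ..t, mu x) ^ (k-1) * Real.exp (-(∫ x in τ..t, mu x)))))
      ≤ α * I1 + (1 - α) * I2 := by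
    have step1 : (∫ τ in (0:ℝ)..t, Real.exp (-∫ x in τ..t, lam3 x) *
        (mu τ * ((∫ x in τ..t, mu x) ^ (k-1) * Real.exp (-(∫ x in τ..t, mu x)))))
        ≤ ∫ τ in (0:ℝ)..t,
          (α * (Real.exp (-∫ x in τ..t, lam1 x) *
            (mu τ * ((∫ x in τ..t, mu x) ^ (k-1) * Real.exp (-(∫ x in τ..t, mu x)))))
          + (1 - α) * (Real.exp (-∫ x in τ..t, lam2 x) *
            (mu τ * ((∫ x in τ..t, mu x) ^ (k-1) * Real.exp (-(∫ x in τ..t, mu x)))))) := by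
      refine intervalIntegral.integral_mono_on ht ((hcc lam3 hc3).intervalIntegrable _ _)
        (((continuous_const.mul (hcc lam1 hc1)).add
          (continuous_const.mul (hcc lam2 hc2))).intervalIntegrable _ _) ?_
      intro τ hτ
      have hMn : 0 ≤ ∫ x in τ..t, mu x :=
        intervalIntegral.integral_nonneg hτ.2 fun x _ => hmu x
      have hcn : 0 ≤ mu τ * ((∫ x in τ..t, mu x) ^ (k-1) * Real.exp (-(∫ x in τ..t, mu x))) := by
        have := hmu τ
        positivity
      have hexpτ : Real.exp (-∫ x in τ..t, lam3 x)
          ≤ α * Real.exp (-∫ x in τ..t, lam1 x) + (1 - α) * Real.exp (-∫ x in τ..t, lam2 x) := by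
        rw [hlin τ t]; exact exp_combo α _ _ hα0 hα1
      calc Real.exp (-∫ x in τ..t, lam3 x) *
            (mu τ * ((∫ x in τ..t, mu x) ^ (k-1) * Real.exp (-(∫ x in τ..t, mu x))))
          ≤ (α * Real.exp (-∫ x in τ..t, lam1 x) + (1 - α) * Real.exp (-∫ x in τ..t, lam2 x)) *
            (mu τ * ((∫ x in τ..t, mu x) ^ (k-1) * Real.exp (-(∫ x in τ..t, mu x)))) :=
            mul_le_mul_of_nonneg_right hexpτ hcn
        _ = _ := by ring
    have step2 : (∫ τ in (0:ℝ)..t,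
          (α * (Real.exp (-∫ x in τ..t, lam1 x) *
            (mu τ * ((∫ x in τ..t, mu x) ^ (k-1) * Real.exp (-(∫ x in τ..t, mu x)))))
          + (1 - α) * (Real.exp (-∫ x in τ..t, lam2 x) *
            (mu τ * ((∫ x in τ..t, mu x) ^ (k-1) * Real.exp (-(∫ x in τ..t, mu x)))))))
        = α * I1 + (1 - α) * I2 := by
      rw [intervalIntegral.integral_add ((continuous_const.fun_mul (hcc lam1 hc1)).intervalIntegrable _ _)
        ((continuous_const.fun_mul (hcc lam2 hc2)).intervalIntegrable _ _),
        intervalIntegral.integral_const_mul, intervalIntegral.integral_const_mul]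
    linarith [step1, step2 ▸ step1]
  -- put it together
  have hfk1 : fk k lam1 mu t = (1 / (Nat.factorial (k - 1) : ℝ)) *
      ((Nat.factorial (k-1) : ℝ) - e1 * G0 - I1) := by
    rw [fk, fk_inner_eq k hk lam1 mu hc1 hmuc t]
  have hfk2 : fk k lam2 mu t = (1 / (Nat.factorial (k - 1) : ℝ)) *
      ((Nat.factorial (k-1) : ℝ) - e2 * G0 - I2) := by
    rw [fk, fk_inner_eq k hk lam2 mu hc2 hmuc t]
  have hfk3 : fk k lam3 mu t = (1 / (Nat.factorial (k - 1) : ℝ)) *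
      ((Nat.factorial (k-1) : ℝ) - Real.exp (-∫ x in (0:ℝ)..t, lam3 x) * G0
        - ∫ τ in (0:ℝ)..t, Real.exp (-∫ x in τ..t, lam3 x) *
          (mu τ * ((∫ x in τ..t, mu x) ^ (k-1) * Real.exp (-(∫ x in τ..t, mu x))))) := by
    rw [fk, fk_inner_eq k hk lam3 mu hc3 hmuc t]
  have hfac : (0:ℝ) ≤ 1 / (Nat.factorial (k - 1) : ℝ) := by positivity
  have key : α * ((Nat.factorial (k-1) : ℝ) - e1 * G0 - I1)
      + (1 - α) * ((Nat.factorial (k-1) : ℝ) - e2 * G0 - I2)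
      ≤ (Nat.factorial (k-1) : ℝ) - Real.exp (-∫ x in (0:ℝ)..t, lam3 x) * G0
        - ∫ τ in (0:ℝ)..t, Real.exp (-∫ x in τ..t, lam3 x) *
          (mu τ * ((∫ x in τ..t, mu x) ^ (k-1) * Real.exp (-(∫ x in τ..t, mu x)))) := by
    have h1 : Real.exp (-∫ x in (0:ℝ)..t, lam3 x) * G0 ≤ (α * e1 + (1 - α) * e2) * G0 :=
      mul_le_mul_of_nonneg_right hexp0 hG0n
    nlinarith [hIcomp, h1]
  calc α * fk k lam1 mu t + (1 - α) * fk k lam2 mu t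
      = (1 / (Nat.factorial (k - 1) : ℝ)) *
        (α * ((Nat.factorial (k-1) : ℝ) - e1 * G0 - I1)
          + (1 - α) * ((Nat.factorial (k-1) : ℝ) - e2 * G0 - I2)) := by
        rw [hfk1, hfk2]; ring
    _ ≤ _ := by
        rw [hfk3]
        exact mul_le_mul_of_nonneg_left key hfac

/-- Continuity of `fk` in `t`. -/
lemma fk_cont (k : ℕ) (hk : 1 ≤ k) (lam mu : ℝ → ℝ)
    (hlc : Continuous lam) (hmc : Continuous mu) :
    Continuous (fk k lam mu) := by
  have hL : ∀ τ t : ℝ, (∫ x in τ..t, lam x)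
      = (∫ x in (0:ℝ)..t, lam x) - ∫ x in (0:ℝ)..τ, lam x := fun τ t =>
    (intervalIntegral.integral_interval_sub_left (hlc.intervalIntegrable _ _)
      (hlc.intervalIntegrable _ _)).symm
  have hM : ∀ τ t : ℝ, (∫ x in τ..t, mu x)
      = (∫ x in (0:ℝ)..t, mu x) - ∫ x in (0:ℝ)..τ, mu x := fun τ t =>
    (intervalIntegral.integral_interval_sub_left (hmc.intervalIntegrable _ _)
      (hmc.intervalIntegrable _ _)).symm
  set F : ℝ → ℝ → ℝ := fun t τ =>
    lam τ * Real.exp ((∫ x in (0:ℝ)..τ, lam x) - (∫ x in (0:ℝ)..t, lam x)) *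
      uGamma k ((∫ x in (0:ℝ)..t, mu x) - ∫ x in (0:ℝ)..τ, mu x) with hF
  have hPl : Continuous (fun y => ∫ x in (0:ℝ)..y, lam x) :=
    intervalIntegral.continuous_primitive (fun a b => hlc.intervalIntegrable a b) 0
  have hPm : Continuous (fun y => ∫ x in (0:ℝ)..y, mu x) :=
    intervalIntegral.continuous_primitive (fun a b => hmc.intervalIntegrable a b) 0
  have hFc : Continuous (Function.uncurry F) := by
    refine ((hlc.comp continuous_snd).mul ?_).mul ?_
    · exact ((hPl.comp continuous_snd).sub (hPl.comp continuous_fst)).rexp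
    · exact (uGamma_cont k hk).comp ((hPm.comp continuous_fst).sub (hPm.comp continuous_snd))
  have hcont : Continuous fun t => ∫ τ in (0:ℝ)..t, F t τ :=
    intervalIntegral.continuous_parametric_intervalIntegral_of_continuous hFc continuous_id
  have : fk k lam mu = fun t => (1 / (Nat.factorial (k - 1) : ℝ)) * ∫ τ in (0:ℝ)..t, F t τ := by
    funext t
    rw [fk]
    congr 1
    refine intervalIntegral.integral_congr fun τ _ => ?_
    rw [hF]
    show lam τ * Real.exp (-∫ x in τ..t, lam x) * uGamma k (∫ x in τ..t, mu x) = _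
    rw [hL τ t, hM τ t]
    ring_nf
  rw [this]
  exact continuous_const.mul hcont

/-- the average visibility `V(k)[λ] = ∫_0^T f_k(t; λ, μ) s(t) dt` is concave
on the set of continuous nonnegative functions. -/
theorem stmt4 (mu : ℝ → ℝ) (hmuc : Continuous mu) (hmu : ∀ x, 0 ≤ mu x)
    (s : ℝ → ℝ) (hs0 : ∀ x, 0 ≤ s x) (hsInt : Integrable s)
    (k : ℕ) (hk : 1 ≤ k) (T : ℝ) (hT : 0 < T)
    (lam1 lam2 : ℝ → ℝ) (hc1 : Continuous lam1) (hc2 : Continuous lam2)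
    (h1 : ∀ x, 0 ≤ lam1 x) (h2 : ∀ x, 0 ≤ lam2 x)
    (α : ℝ) (hα : α ∈ Set.Ioo (0:ℝ) 1) :
    (∫ t in (0:ℝ)..T, fk k (fun x => α * lam1 x + (1 - α) * lam2 x) mu t * s t) ≥
      α * (∫ t in (0:ℝ)..T, fk k lam1 mu t * s t) +
        (1 - α) * (∫ t in (0:ℝ)..T, fk k lam2 mu t * s t) := by
  set lam3 : ℝ → ℝ := fun x => α * lam1 x + (1 - α) * lam2 x with hlam3
  have hc3 : Continuous lam3 := (continuous_const.mul hc1).add (continuous_const.mul hc2)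
  -- integrability of fk * s on [0, T]
  have hInt : ∀ lam : ℝ → ℝ, Continuous lam →
      IntervalIntegrable (fun t => fk k lam mu t * s t) volume 0 T := by
    intro lam hlc
    have hfc := fk_cont k hk lam mu hlc hmuc
    obtain ⟨C, hC⟩ := (isCompact_Icc (a := (0:ℝ)) (b := T)).exists_bound_of_continuousOn
      hfc.continuousOn
    rw [intervalIntegrable_iff_integrableOn_Ioc_of_le hT.le]
    refine Integrable.mono' ((hsInt.abs.const_mul C).integrableOn)
      (hfc.aestronglyMeasurable.mul hsInt.1.restrict) ?_
    refine (ae_restrict_mem measurableSet_Ioc).mono fun t ht => ?_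
    rw [norm_mul]
    have hC' := hC t (Set.Ioc_subset_Icc_self ht)
    have : ‖s t‖ = |s t| := rfl
    calc ‖fk k lam mu t‖ * ‖s t‖ ≤ C * ‖s t‖ :=
        mul_le_mul_of_nonneg_right hC' (norm_nonneg _)
      _ = C * |s t| := by rw [this]
  -- pointwise inequality on [0, T]
  have hpt : ∀ t ∈ Set.Icc (0:ℝ) T,
      α * (fk k lam1 mu t * s t) + (1 - α) * (fk k lam2 mu t * s t)
        ≤ fk k lam3 mu t * s t := by
    intro t ht
    have hconc := fk_concave_pt mu hmuc hmu k hk lam1 lam2 hc1 hc2 α hα.1.le hα.2.le t ht.1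
    nlinarith [mul_le_mul_of_nonneg_right hconc (hs0 t)]
  have hRHS : α * (∫ t in (0:ℝ)..T, fk k lam1 mu t * s t) +
      (1 - α) * (∫ t in (0:ℝ)..T, fk k lam2 mu t * s t)
      = ∫ t in (0:ℝ)..T, (α * (fk k lam1 mu t * s t) + (1 - α) * (fk k lam2 mu t * s t)) := by
    rw [intervalIntegral.integral_add ((hInt lam1 hc1).const_mul α)
      ((hInt lam2 hc2).const_mul (1 - α)),
      intervalIntegral.integral_const_mul, intervalIntegral.integral_const_mul]
  rw [ge_iff_le, hRHS]
  exact intervalIntegral.integral_mono_on hT.le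
    (((hInt lam1 hc1).const_mul α).add ((hInt lam2 hc2).const_mul (1 - α)))
    (hInt lam3 hc3) hpt
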